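/- Let K_∥ > 0, γ ≥ 0, Δt > 0, ν > 0. Let T^n, T^{n+1} : [0,1] → ℝ be twice continuously differentiable functions with T^n nonnegative, satisfying the semi-discrete IMEX relation (T^{n+1}(s) − T^n(s))/Δt − ν (T^{n+1})''(s) = d/ds[ (K_∥ (T^n(s))^{5/2} − ν) (T^n)'(s) ] for all s ∈ (0,1), together with the boundary conditions −ν (T^{n+1})'(0) + γ T^{n+1}(0) = (K_∥ (T^n(0))^{5/2} − ν)(T^n)'(0) and −ν (T^{n+1})'(1) − γ T^{n+1}(1) = (K_∥ (T^n(1))^{5/2} − ν)(T^n)'(1). If K_∥ · (sup_{s∈[0,1]} T^n(s))^{5/2} ≤ ν, then (1/2)∫_0^1 (T^{n+1})² ds + (νΔt/2)∫_0^1 |(T^{n+1})'|² ds ≤ (1/2)∫_0^1 (T^n)² ds + (νΔt/2)∫_0^1 |(T^n)'|² ds. -/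

import Mathlib

/-- Proposition 2.3: energy stability of the IMEX time discretization of
the 1D nonlinear heat equation `∂ₜT = ∂ₛ(K T^{5/2} ∂ₛT)` with nonlinear
Robin boundary conditions, provided the viscosity `ν` dominates
`K (sup T^n)^{5/2}`. -/
theorem imex_energy_stability_1D
    (K γ Δt ν : ℝ) (hK : 0 < K) (hγ : 0 ≤ γ) (hΔt : 0 < Δt) (hν : 0 < ν)
    (Tn Tn1 : ℝ → ℝ)
    (hTn : ContDiff ℝ 2 Tn) (hTn1 : ContDiff ℝ 2 Tn1)
    (hTnpos : ∀ s ∈ Set.Icc (0:ℝ) 1, 0 ≤ Tn s)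
    (hpde : ∀ s ∈ Set.Ioo (0:ℝ) 1,
      (Tn1 s - Tn s) / Δt - ν * deriv (deriv Tn1) s
        = deriv (fun x => (K * Tn x ^ ((5:ℝ)/2) - ν) * deriv Tn x) s)
    (hbc0 : -ν * deriv Tn1 0 + γ * Tn1 0
        = (K * Tn 0 ^ ((5:ℝ)/2) - ν) * deriv Tn 0)
    (hbc1 : -ν * deriv Tn1 1 - γ * Tn1 1
        = (K * Tn 1 ^ ((5:ℝ)/2) - ν) * deriv Tn 1)
    (hsup : K * (sSup (Tn '' Set.Icc (0:ℝ) 1)) ^ ((5:ℝ)/2) ≤ ν) :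
    (1/2) * (∫ s in (0:ℝ)..1, (Tn1 s)^2)
      + (ν * Δt / 2) * (∫ s in (0:ℝ)..1, (deriv Tn1 s)^2)
    ≤ (1/2) * (∫ s in (0:ℝ)..1, (Tn s)^2)
      + (ν * Δt / 2) * (∫ s in (0:ℝ)..1, (deriv Tn s)^2) := by
  -- regularity facts
  have h2u : ContDiff ℝ ((1:ℕ)+1) Tn := by exact_mod_cast hTn
  have h2v : ContDiff ℝ ((1:ℕ)+1) Tn1 := by exact_mod_cast hTn1
  have hud : Differentiable ℝ Tn := hTn.differentiable (by norm_num)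
  have hvd : Differentiable ℝ Tn1 := hTn1.differentiable (by norm_num)
  have hu'1 : ContDiff ℝ 1 (deriv Tn) := (contDiff_succ_iff_deriv.mp h2u).2.2
  have hv'1 : ContDiff ℝ 1 (deriv Tn1) := (contDiff_succ_iff_deriv.mp h2v).2.2
  have hu'd : Differentiable ℝ (deriv Tn) := (contDiff_one_iff_deriv.mp hu'1).1
  have hv'd : Differentiable ℝ (deriv Tn1) := (contDiff_one_iff_deriv.mp hv'1).1
  have cu : Continuous Tn := hTn.continuous
  have cv : Continuous Tn1 := hTn1.continuous
  have cu' : Continuous (deriv Tn) := hu'1.continuous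
  have cv' : Continuous (deriv Tn1) := hv'1.continuous
  have cu'' : Continuous (deriv (deriv Tn)) := (contDiff_one_iff_deriv.mp hu'1).2
  have cv'' : Continuous (deriv (deriv Tn1)) := (contDiff_one_iff_deriv.mp hv'1).2
  have crpow52 : Continuous (fun x => Tn x ^ ((5:ℝ)/2)) :=
    cu.rpow_const (fun x => Or.inr (by norm_num))
  have crpow32 : Continuous (fun x => Tn x ^ ((3:ℝ)/2)) :=
    cu.rpow_const (fun x => Or.inr (by norm_num))
  -- nonlinear flux and its derivative
  set h : ℝ → ℝ := fun x => (K * Tn x ^ ((5:ℝ)/2) - ν) * deriv Tn x with hh_def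
  clear_value h
  set h' : ℝ → ℝ := fun x =>
    (K * ((5:ℝ)/2 * Tn x ^ ((3:ℝ)/2) * deriv Tn x)) * deriv Tn x
      + (K * Tn x ^ ((5:ℝ)/2) - ν) * deriv (deriv Tn) x with hh'_def
  clear_value h'
  have hrpow : ∀ x : ℝ, HasDerivAt (fun y : ℝ => y ^ ((5:ℝ)/2)) ((5:ℝ)/2 * x ^ ((3:ℝ)/2)) x := by
    intro x
    have := Real.hasDerivAt_rpow_const (p := (5:ℝ)/2) (x := x) (Or.inr (by norm_num))
    convert this using 2
    norm_num
  have hH : ∀ x : ℝ, HasDerivAt h (h' x) x := by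
    intro x
    simp only [hh_def, hh'_def]
    have h1 : HasDerivAt (fun y => Tn y ^ ((5:ℝ)/2))
        ((5:ℝ)/2 * Tn x ^ ((3:ℝ)/2) * deriv Tn x) x :=
      (hrpow (Tn x)).comp x (hud x).hasDerivAt
    exact ((h1.const_mul K).sub_const ν).mul (hu'd x).hasDerivAt
  have ch : Continuous h := by
    simp only [hh_def]
    exact ((continuous_const.mul crpow52).sub continuous_const).mul cu'
  have ch' : Continuous h' := by
    simp only [hh'_def]
    refine Continuous.add ?_ ?_
    · exact (continuous_const.mul ((continuous_const.mul crpow32).mul cu')).mul cu'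
    · exact ((continuous_const.mul crpow52).sub continuous_const).mul cu''
  -- the flux of the energy identity
  set F : ℝ → ℝ := fun x => ν * deriv Tn1 x * Tn1 x + h x * Tn1 x with hF_def
  set F' : ℝ → ℝ := fun x =>
    (ν * deriv (deriv Tn1) x * Tn1 x + ν * deriv Tn1 x * deriv Tn1 x)
      + (h' x * Tn1 x + h x * deriv Tn1 x) with hF'_def
  clear_value F F'
  have hFd : ∀ x : ℝ, HasDerivAt F (F' x) x := by
    intro x
    simp only [hF_def, hF'_def]
    exact (((hv'd x).hasDerivAt.const_mul ν).mul (hvd x).hasDerivAt).add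
      ((hH x).mul (hvd x).hasDerivAt)
  have cF' : Continuous F' := by
    simp only [hF'_def]
    refine Continuous.add ?_ ?_
    · exact ((continuous_const.mul cv'').mul cv).add ((continuous_const.mul cv').mul cv')
    · exact (ch'.mul cv).add (ch.mul cv')
  -- fundamental theorem of calculus
  have hFTC : ∫ s in (0:ℝ)..1, F' s = F 1 - F 0 :=
    intervalIntegral.integral_eq_sub_of_hasDerivAt (fun s _ => hFd s)
      (cF'.intervalIntegrable 0 1)
  -- rewrite the integrand using the PDE
  set G : ℝ → ℝ := fun s =>
    ν * (deriv Tn1 s)^2 + (Tn1 s - Tn s) * Tn1 s / Δt + h s * deriv Tn1 s with hG_def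
  clear_value G
  have cG : Continuous G := by
    simp only [hG_def]
    refine Continuous.add (Continuous.add ?_ ?_) ?_
    · exact continuous_const.mul (cv'.pow 2)
    · exact ((cv.sub cu).mul cv).div_const Δt
    · exact ch.mul cv'
  have hae : ∫ s in (0:ℝ)..1, F' s = ∫ s in (0:ℝ)..1, G s := by
    apply intervalIntegral.integral_congr_ae
    have h1 : ∀ᵐ x : ℝ, x ≠ (1:ℝ) := by
      refine MeasureTheory.ae_iff.mpr ?_
      have : {x : ℝ | ¬ x ≠ 1} = {1} := by ext x; simp
      rw [this]
      exact Real.volume_singleton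
    filter_upwards [h1] with x hx1 hx
    rw [Set.uIoc_of_le (by norm_num : (0:ℝ) ≤ 1)] at hx
    have hxo : x ∈ Set.Ioo (0:ℝ) 1 := ⟨hx.1, lt_of_le_of_ne hx.2 hx1⟩
    have hp := hpde x hxo
    rw [(hH x).deriv] at hp
    simp only [hF'_def, hG_def]
    linear_combination (-(Tn1 x)) * hp
  -- boundary terms are dissipative
  have hbdry : F 1 - F 0 ≤ 0 := by
    have e1 : h 1 = -ν * deriv Tn1 1 - γ * Tn1 1 := by
      simp only [hh_def]; exact hbc1.symm
    have e0 : h 0 = -ν * deriv Tn1 0 + γ * Tn1 0 := by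
      simp only [hh_def]; exact hbc0.symm
    simp only [hF_def]
    rw [e1, e0]
    nlinarith [mul_nonneg hγ (sq_nonneg (Tn1 1)), mul_nonneg hγ (sq_nonneg (Tn1 0))]
  have hGle : ∫ s in (0:ℝ)..1, G s ≤ 0 := by
    rw [← hae, hFTC]; exact hbdry
  -- lower bound for the integrand
  set Q : ℝ → ℝ := fun s => (ν/2) * (deriv Tn1 s)^2 - (ν/2) * (deriv Tn s)^2
      + (Tn1 s)^2/(2*Δt) - (Tn s)^2/(2*Δt) with hQ_def
  clear_value Q
  have cQ : Continuous Q := by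
    simp only [hQ_def]
    refine Continuous.sub (Continuous.add (Continuous.sub ?_ ?_) ?_) ?_
    · exact continuous_const.mul (cv'.pow 2)
    · exact continuous_const.mul (cu'.pow 2)
    · exact (cv.pow 2).div_const _
    · exact (cu.pow 2).div_const _
  have hΔ : Δt ≠ 0 := hΔt.ne'
  have hQG : ∀ s ∈ Set.Icc (0:ℝ) 1, Q s ≤ G s := by
    intro s hs
    have hc0 : 0 ≤ K * Tn s ^ ((5:ℝ)/2) :=
      mul_nonneg hK.le (Real.rpow_nonneg (hTnpos s hs) _)
    have hle : Tn s ≤ sSup (Tn '' Set.Icc (0:ℝ) 1) :=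
      le_csSup (IsCompact.bddAbove (isCompact_Icc.image cu)) (Set.mem_image_of_mem _ hs)
    have hcν : K * Tn s ^ ((5:ℝ)/2) ≤ ν := by
      refine le_trans ?_ hsup
      exact mul_le_mul_of_nonneg_left
        (Real.rpow_le_rpow (hTnpos s hs) hle (by norm_num)) hK.le
    have key : 0 ≤ (ν/2) * (deriv Tn s)^2 + (ν/2) * (deriv Tn1 s)^2
        + h s * deriv Tn1 s := by
      simp only [hh_def]
      nlinarith [mul_nonneg (sub_nonneg.mpr hcν) (sq_nonneg (deriv Tn s - deriv Tn1 s)),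
        mul_nonneg (sub_nonneg.mpr hcν) (sq_nonneg (deriv Tn s + deriv Tn1 s)),
        mul_nonneg hc0 (sq_nonneg (deriv Tn s)), mul_nonneg hc0 (sq_nonneg (deriv Tn1 s))]
    have h2 : 0 ≤ (Tn1 s - Tn s)^2 / (2*Δt) := div_nonneg (sq_nonneg _) (by linarith)
    have hring : G s - Q s = ((ν/2) * (deriv Tn s)^2 + (ν/2) * (deriv Tn1 s)^2
        + h s * deriv Tn1 s) + (Tn1 s - Tn s)^2 / (2*Δt) := by
      simp only [hG_def, hQ_def]
      field_simp
      ring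
    linarith
  have hQint : IntervalIntegrable Q MeasureTheory.volume 0 1 := cQ.intervalIntegrable 0 1
  have hGint : IntervalIntegrable G MeasureTheory.volume 0 1 := cG.intervalIntegrable 0 1
  have hQle : ∫ s in (0:ℝ)..1, Q s ≤ ∫ s in (0:ℝ)..1, G s :=
    intervalIntegral.integral_mono_on (by norm_num) hQint hGint hQG
  -- split the integral of Q
  have i1 : IntervalIntegrable (fun s => (ν/2) * (deriv Tn1 s)^2) MeasureTheory.volume 0 1 :=
    (continuous_const.mul (cv'.pow 2)).intervalIntegrable 0 1
  have i2 : IntervalIntegrable (fun s => (ν/2) * (deriv Tn s)^2) MeasureTheory.volume 0 1 :=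
    (continuous_const.mul (cu'.pow 2)).intervalIntegrable 0 1
  have i3 : IntervalIntegrable (fun s => (Tn1 s)^2/(2*Δt)) MeasureTheory.volume 0 1 :=
    ((cv.pow 2).div_const _).intervalIntegrable 0 1
  have i4 : IntervalIntegrable (fun s => (Tn s)^2/(2*Δt)) MeasureTheory.volume 0 1 :=
    ((cu.pow 2).div_const _).intervalIntegrable 0 1
  have hsplit : ∫ s in (0:ℝ)..1, Q s
      = (ν/2) * (∫ s in (0:ℝ)..1, (deriv Tn1 s)^2)
        - (ν/2) * (∫ s in (0:ℝ)..1, (deriv Tn s)^2)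
        + (∫ s in (0:ℝ)..1, (Tn1 s)^2)/(2*Δt)
        - (∫ s in (0:ℝ)..1, (Tn s)^2)/(2*Δt) := by
    simp only [hQ_def]
    rw [intervalIntegral.integral_sub ((i1.sub i2).add i3) i4,
      intervalIntegral.integral_add (i1.sub i2) i3,
      intervalIntegral.integral_sub i1 i2,
      intervalIntegral.integral_const_mul, intervalIntegral.integral_const_mul,
      intervalIntegral.integral_div, intervalIntegral.integral_div]
  -- conclude
  rw [hsplit] at hQle
  have hfin : (ν/2) * (∫ s in (0:ℝ)..1, (deriv Tn1 s)^2)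
        - (ν/2) * (∫ s in (0:ℝ)..1, (deriv Tn s)^2)
        + (∫ s in (0:ℝ)..1, (Tn1 s)^2)/(2*Δt)
        - (∫ s in (0:ℝ)..1, (Tn s)^2)/(2*Δt) ≤ 0 := le_trans hQle hGle
  have hmul := mul_le_mul_of_nonneg_left hfin hΔt.le
  rw [mul_zero] at hmul
  have e : Δt * ((ν/2) * (∫ s in (0:ℝ)..1, (deriv Tn1 s)^2)
        - (ν/2) * (∫ s in (0:ℝ)..1, (deriv Tn s)^2)
        + (∫ s in (0:ℝ)..1, (Tn1 s)^2)/(2*Δt)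
        - (∫ s in (0:ℝ)..1, (Tn s)^2)/(2*Δt))
      = (ν * Δt / 2) * (∫ s in (0:ℝ)..1, (deriv Tn1 s)^2)
        - (ν * Δt / 2) * (∫ s in (0:ℝ)..1, (deriv Tn s)^2)
        + (1/2) * (∫ s in (0:ℝ)..1, (Tn1 s)^2)
        - (1/2) * (∫ s in (0:ℝ)..1, (Tn s)^2) := by
    field_simp
  rw [e] at hmul
  linarith
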